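/- arXiv:math/0606384 — 2 statements merged into one kernel-verified Lean document; each statement's English description precedes it below -/
import Mathlib

section
/- Let α and β be algebraic units in ℂ. If [ℚ(α):ℚ] = [ℚ(β):ℚ] = m and [ℚ(αβ)(α):ℚ(αβ)] = m, then (αβ)^m = 1 or (αβ)^m = -1. -/
open Polynomial IntermediateField

/-- An algebraic unit: root of a monic integer polynomial with constant term ±1. -/
def IsAlgebraicUnit (α : ℂ) : Prop :=
  ∃ p : Polynomial ℤ, p.Monic ∧ (p.coeff 0 = 1 ∨ p.coeff 0 = -1) ∧ Polynomial.aeval α p = 0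

/-- The degree of α over ℚ, i.e. [ℚ(α):ℚ]. -/
noncomputable def degQ (α : ℂ) : ℕ := (minpoly ℚ α).natDegree

-- auxiliary: monic dvd monic of same degree implies equal
lemma monic_dvd_eq {K : Type*} [Field K] {p q : K[X]} (hq : q.Monic) (hp : p.Monic)
    (hdvd : q ∣ p) (hdeg : q.natDegree = p.natDegree) : q = p := by
  obtain ⟨c, rfl⟩ := hdvd
  have hc0 : c ≠ 0 := by rintro rfl; rw [mul_zero] at hp; exact hp.ne_zero rfl
  have hdc : c.natDegree = 0 := by
    have := natDegree_mul hq.ne_zero hc0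
    omega
  have hlc : c.leadingCoeff = 1 := by
    have := hp.leadingCoeff
    rw [leadingCoeff_mul, hq.leadingCoeff, one_mul] at this
    exact this
  have : c = C (c.coeff 0) := eq_C_of_natDegree_eq_zero hdc
  rw [this]
  have : c.coeff 0 = 1 := by
    rwa [leadingCoeff, hdc] at hlc
  rw [this, map_one, mul_one]

lemma unit_facts {α : ℂ} (hα : IsAlgebraicUnit α) :
    IsIntegral ℚ α ∧ α ≠ 0 ∧ ((minpoly ℚ α).coeff 0 = 1 ∨ (minpoly ℚ α).coeff 0 = -1) := by
  obtain ⟨p, hmon, hc, hroot⟩ := hα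
  have hintZ : IsIntegral ℤ α := ⟨p, hmon, hroot⟩
  have hne : α ≠ 0 := by
    rintro rfl
    rw [aeval_def, eval₂_at_zero] at hroot
    rcases hc with h | h <;> rw [h] at hroot <;> norm_num at hroot
  have hdvd : minpoly ℤ α ∣ p := minpoly.isIntegrallyClosed_dvd hintZ hroot
  obtain ⟨q, hq⟩ := hdvd
  have hcoe : (minpoly ℤ α).coeff 0 * q.coeff 0 = p.coeff 0 := by
    rw [hq, mul_coeff_zero]
  have hunit : IsUnit ((minpoly ℤ α).coeff 0) := by
    apply isUnit_of_dvd_unit ⟨q.coeff 0, hcoe.symm⟩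
    rcases hc with h | h <;> rw [h] <;> simp
  have heq : minpoly ℚ α = (minpoly ℤ α).map (algebraMap ℤ ℚ) :=
    minpoly.isIntegrallyClosed_eq_field_fractions ℚ ℂ hintZ
  refine ⟨hintZ.tower_top, hne, ?_⟩
  rw [heq, coeff_map]
  rcases Int.isUnit_iff.mp hunit with h | h <;> rw [h] <;> simp

theorem stmt_1 (α β : ℂ) (m : ℕ) (hα : IsAlgebraicUnit α) (hβ : IsAlgebraicUnit β)
    (h1 : degQ α = m) (h2 : degQ β = m)
    (h3 : (minpoly (↥ℚ⟮α * β⟯) α).natDegree = m) :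
    (α * β) ^ m = 1 ∨ (α * β) ^ m = -1 := by
  obtain ⟨hαint, hα0, ha0⟩ := unit_facts hα
  obtain ⟨hβint, hβ0, hc0⟩ := unit_facts hβ
  set K := ℚ⟮α * β⟯ with hK
  set γ' : K := AdjoinSimple.gen ℚ (α * β) with hγ'
  have hγmap : algebraMap K ℂ γ' = α * β := AdjoinSimple.algebraMap_gen ℚ (α * β)
  have hαK : IsIntegral K α := hαint.tower_top
  set a0 : ℚ := (minpoly ℚ α).coeff 0 with ha0def
  set c0 : ℚ := (minpoly ℚ β).coeff 0 with hc0def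
  have hc0ne : c0 ≠ 0 := by rcases hc0 with h | h <;> rw [h] <;> norm_num
  have ha0ne : a0 ≠ 0 := by rcases ha0 with h | h <;> rw [h] <;> norm_num
  set c0' : K := algebraMap ℚ K c0 with hc0'
  have hc0'ne : c0' ≠ 0 :=
    (_root_.map_ne_zero_iff (algebraMap ℚ ↥K) (algebraMap ℚ ↥K).injective).mpr hc0ne
  set r' : K[X] := (minpoly ℚ β).map (algebraMap ℚ K) with hr'
  have hr'monic : r'.Monic := (minpoly.monic hβint).map _
  have hr'deg : r'.natDegree = m := by
    rw [hr', natDegree_map]; exact h2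
  have hr'c0 : r'.coeff 0 = c0' := by rw [hr', coeff_map]
  have hr'root : Polynomial.aeval β r' = 0 := by
    rw [hr', aeval_map_algebraMap]; exact minpoly.aeval ℚ β
  -- trailing degree of r' is 0
  have htr : r'.natTrailingDegree = 0 := by
    apply natTrailingDegree_eq_zero_of_constantCoeff_ne_zero
    rw [constantCoeff_apply, hr'c0]
    exact hc0'ne
  have hrevdeg : r'.reverse.natDegree = m := by
    rw [reverse_natDegree, htr, hr'deg, Nat.sub_zero]
  have hrevlead : r'.reverse.leadingCoeff = c0' := by
    rw [reverse_leadingCoeff, trailingCoeff, htr, hr'c0]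
  have hrevc0 : r'.reverse.coeff 0 = 1 := by
    rw [coeff_zero_reverse, hr'monic.leadingCoeff]
  -- root of reverse at β⁻¹
  letI : Invertible β := invertibleOfNonzero hβ0
  have hrevroot : Polynomial.aeval β⁻¹ r'.reverse = 0 := by
    have := (eval₂_reverse_eq_zero_iff (algebraMap K ℂ) β r').mpr (by
      rwa [aeval_def] at hr'root)
    rw [aeval_def, ← invOf_eq_inv β]
    exact this
  -- scaleRoots
  set s : K[X] := r'.reverse.scaleRoots γ' with hs
  have hsroot : Polynomial.aeval α s = 0 := by
    have := scaleRoots_aeval_eq_zero (p := r'.reverse) (r := γ') hrevroot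
    rwa [hγmap, mul_assoc, mul_inv_cancel₀ hβ0, mul_one] at this
  have hsdeg : s.natDegree = m := by rw [hs, natDegree_scaleRoots, hrevdeg]
  have hslead : s.leadingCoeff = c0' := by
    rw [hs, leadingCoeff, natDegree_scaleRoots, coeff_scaleRoots_natDegree, hrevlead]
  have hsc0 : s.coeff 0 = γ' ^ m := by
    rw [hs, coeff_scaleRoots, hrevc0, one_mul, Nat.sub_zero, hrevdeg]
  have hsne : s ≠ 0 := by
    intro h; rw [h, leadingCoeff_zero] at hslead; exact hc0'ne hslead.symm
  -- monic polynomial with root α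
  set p' : K[X] := s * C s.leadingCoeff⁻¹ with hp'
  have hp'monic : p'.Monic := monic_mul_leadingCoeff_inv hsne
  have hp'deg : p'.natDegree = m := by
    rw [hp', natDegree_mul hsne (by simp [hslead, hc0'ne]), natDegree_C, add_zero, hsdeg]
  have hp'root : Polynomial.aeval α p' = 0 := by
    rw [hp', map_mul, hsroot, zero_mul]
  have hp'c0 : p'.coeff 0 = γ' ^ m * c0'⁻¹ := by
    rw [hp', mul_coeff_zero, coeff_C_zero, hsc0, hslead]
  -- minpoly K α equals p'
  have hmin1 : minpoly K α = p' := by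
    apply monic_dvd_eq (minpoly.monic hαK) hp'monic (minpoly.dvd K α hp'root)
    rw [h3, hp'deg]
  -- minpoly K α equals the map of minpoly ℚ α
  set q' : K[X] := (minpoly ℚ α).map (algebraMap ℚ K) with hq'
  have hmin2 : minpoly K α = q' := by
    apply monic_dvd_eq (minpoly.monic hαK) ((minpoly.monic hαint).map _)
      (minpoly.dvd_map_of_isScalarTower ℚ K α)
    rw [h3, natDegree_map]
    exact h1.symm
  have hq'c0 : q'.coeff 0 = algebraMap ℚ K a0 := by rw [hq', coeff_map]
  have key : γ' ^ m * c0'⁻¹ = algebraMap ℚ K a0 := by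
    rw [← hp'c0, ← hmin1, hmin2, hq'c0]
  have keyK : γ' ^ m = algebraMap ℚ K (a0 * c0) := by
    field_simp [hc0'ne] at key
    rw [key, hc0', map_mul, eq_ratCast (algebraMap ℚ ↥K) a0]
    ring
  have keyC : (α * β) ^ m = algebraMap ℚ ℂ (a0 * c0) := by
    have := congrArg (algebraMap K ℂ) keyK
    rwa [map_pow, hγmap, ← IsScalarTower.algebraMap_apply] at this
  rcases ha0 with h | h <;> rcases hc0 with h' | h' <;>
    rw [keyC, h, h'] <;> simp
end

section
/- Let α and β be algebraic units in ℂ with [ℚ(α):ℚ] < [ℚ(β):ℚ]. Then [ℚ(αβ):ℚ] is not coprime to [ℚ(β):ℚ]. -/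
open Polynomial IntermediateField

lemma IsAlgebraicUnit.isIntegral {α : ℂ} (h : IsAlgebraicUnit α) : IsIntegral ℚ α := by
  obtain ⟨p, hm, -, hev⟩ := h
  have : IsIntegral ℤ α := ⟨p, hm, by rw [aeval_def] at hev; exact hev⟩
  exact this.tower_top

lemma IsAlgebraicUnit.ne_zero {α : ℂ} (h : IsAlgebraicUnit α) : α ≠ 0 := by
  obtain ⟨p, hm, hc, hev⟩ := h
  rintro rfl
  rw [aeval_def, eval₂_at_zero] at hev
  have h0 : p.coeff 0 = 0 := by simpa using hev
  rcases hc with hc | hc <;> omega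

set_option maxHeartbeats 1000000 in
theorem stmt_5 (α β : ℂ) (hα : IsAlgebraicUnit α) (hβ : IsAlgebraicUnit β)
    (hlt : degQ α < degQ β) :
    ¬ Nat.Coprime (degQ (α * β)) (degQ β) := by
  intro hcop
  have hαi : IsIntegral ℚ α := hα.isIntegral
  have hβi : IsIntegral ℚ β := hβ.isIntegral
  have hγi : IsIntegral ℚ (α * β) := hαi.mul hβi
  set K : IntermediateField ℚ ℂ := ℚ⟮α * β⟯ with hK
  haveI : FiniteDimensional ℚ K := adjoin.finiteDimensional hγi
  have hαK : IsIntegral K α := hαi.tower_top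
  have hβK : IsIntegral K β := hβi.tower_top
  haveI : FiniteDimensional K K⟮α⟯ := adjoin.finiteDimensional hαK
  haveI : FiniteDimensional K K⟮β⟯ := adjoin.finiteDimensional hβK
  haveI : FiniteDimensional ℚ K⟮β⟯ := Module.Finite.trans K _
  -- β = (α*β) * α⁻¹ ∈ K⟮α⟯ so K⟮β⟯ ≤ K⟮α⟯
  have hle : K⟮β⟯ ≤ K⟮α⟯ := by
    rw [adjoin_simple_le_iff]
    have hγ : (α * β) ∈ K⟮α⟯ := by
      apply IntermediateField.algebraMap_mem K⟮α⟯ (⟨α * β, _⟩ : K)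
      exact mem_adjoin_simple_self ℚ (α * β)
    have hβeq : β = (α * β) * α⁻¹ := by
      rw [mul_comm α β, mul_assoc, mul_inv_cancel₀ hα.ne_zero, mul_one]
    rw [hβeq]
    exact mul_mem hγ (inv_mem (mem_adjoin_simple_self K α))
  -- degQ β divides finrank ℚ K⟮β⟯
  have hdvd : degQ β ∣ Module.finrank ℚ K⟮β⟯ := by
    have hmem : β ∈ K⟮β⟯ := mem_adjoin_simple_self K β
    have hint : IsIntegral ℚ (⟨β, hmem⟩ : K⟮β⟯) := by
      apply (isIntegral_algebraMap_iff (algebraMap K⟮β⟯ ℂ).injective).mp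
      exact hβi
    have := minpoly.degree_dvd hint
    rwa [show minpoly ℚ (⟨β, hmem⟩ : K⟮β⟯) = minpoly ℚ β from ?_] at this
    rw [← minpoly.algebraMap_eq (algebraMap K⟮β⟯ ℂ).injective (⟨β, hmem⟩ : K⟮β⟯)]
    rfl
  -- tower
  have htower : Module.finrank ℚ (K⟮β⟯ : IntermediateField K ℂ) =
      Module.finrank ℚ K * Module.finrank K K⟮β⟯ :=
    (Module.finrank_mul_finrank ℚ K K⟮β⟯).symm
  have hKrank : Module.finrank ℚ K = degQ (α * β) := adjoin.finrank hγi
  set m := Module.finrank K K⟮β⟯ with hm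
  have hmle : m ≤ degQ α := by
    have h1 : m ≤ Module.finrank K K⟮α⟯ :=
      LinearMap.finrank_le_finrank_of_injective
        (f := (IntermediateField.inclusion hle).toLinearMap)
        (IntermediateField.inclusion_injective hle)
    have h2 : Module.finrank K K⟮α⟯ = (minpoly K α).natDegree := adjoin.finrank hαK
    have h3 : (minpoly K α).natDegree ≤ (minpoly ℚ α).natDegree := by
      have hdvd' : minpoly K α ∣ (minpoly ℚ α).map (algebraMap ℚ K) :=
        minpoly.dvd_map_of_isScalarTower ℚ K α
      have hne : ((minpoly ℚ α).map (algebraMap ℚ K)) ≠ 0 := by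
        simpa using (minpoly.ne_zero hαi)
      calc (minpoly K α).natDegree ≤ ((minpoly ℚ α).map (algebraMap ℚ K)).natDegree :=
            natDegree_le_of_dvd hdvd' hne
        _ = (minpoly ℚ α).natDegree := natDegree_map _
    exact (h1.trans (le_of_eq h2)).trans h3
  have hmpos : 0 < m := Module.finrank_pos
  -- degQ β ∣ degQ (α*β) * m, coprime ⇒ degQ β ∣ m
  rw [htower, hKrank] at hdvd
  have : degQ β ∣ m := (Nat.Coprime.dvd_of_dvd_mul_left (hcop.symm) hdvd)
  have := Nat.le_of_dvd hmpos this
  omega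
end
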